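/- For an integrable nonnegative symmetric function φ : ℝ^d → [0,1] and integers n1, n2 ≥ 2 with n1 + n2 ≥ 6, one has ∫ φ^{⋆n1}(x) φ^{⋆n2}(x) φ(x) dx ≤ φ^{⋆(n1+n2)}(0) ≤ (∫ φ(x) dx)^{n1+n2-6} · φ^{⋆6}(0). -/

import Mathlib

open MeasureTheory

noncomputable def conv {d : ℕ} (f g : EuclideanSpace ℝ (Fin d) → ℝ)
    (x : EuclideanSpace ℝ (Fin d)) : ℝ := ∫ u, f (x - u) * g u

/-- `iterConv f n` is the `(n+1)`-fold self-convolution of `f`, so `iterConv f 0 = f`. -/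
noncomputable def iterConv {d : ℕ} (f : EuclideanSpace ℝ (Fin d) → ℝ) :
    ℕ → EuclideanSpace ℝ (Fin d) → ℝ
  | 0 => f
  | n + 1 => conv (iterConv f n) f

open scoped Convolution

variable {d : ℕ}

lemma conv_eq (f g : EuclideanSpace ℝ (Fin d) → ℝ) :
    conv f g = g ⋆[ContinuousLinearMap.mul ℝ ℝ, volume] f := by
  funext x
  rw [MeasureTheory.convolution_def]
  simp only [ContinuousLinearMap.mul_apply', conv]
  simp [mul_comm]

section
variable (φ : EuclideanSpace ℝ (Fin d) → ℝ)
    (hint : Integrable φ) (hnonneg : ∀ x, 0 ≤ φ x) (hle : ∀ x, φ x ≤ 1)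
    (hsymm : ∀ x, φ (-x) = φ x)

include hint in
lemma iterConv_integrable : ∀ n, Integrable (iterConv φ n) := by
  intro n
  induction n with
  | zero => exact hint
  | succ n ih =>
    show Integrable (conv (iterConv φ n) φ) volume
    rw [conv_eq]
    exact hint.integrable_convolution _ ih

include hnonneg in
lemma iterConv_nonneg : ∀ n x, 0 ≤ iterConv φ n x := by
  intro n
  induction n with
  | zero => exact hnonneg
  | succ n ih =>
    intro x
    exact integral_nonneg fun u => mul_nonneg (ih _) (hnonneg u)

include hint hnonneg hle in
lemma iterConv_bdd : ∀ n x, iterConv φ n x ≤ ((∫ y, φ y) + 1) ^ n := by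
  have hI : 0 ≤ ∫ y, φ y := integral_nonneg hnonneg
  intro n
  induction n with
  | zero => intro x; show φ x ≤ _; simpa using hle x
  | succ n ih =>
    intro x
    have h1 : iterConv φ (n + 1) x ≤ ∫ u, ((∫ y, φ y) + 1) ^ n * φ u := by
      refine integral_mono_of_nonneg (Filter.Eventually.of_forall fun u =>
        mul_nonneg (iterConv_nonneg φ hnonneg n _) (hnonneg u)) (hint.const_mul _) ?_
      exact Filter.Eventually.of_forall fun u =>
        mul_le_mul_of_nonneg_right (ih _) (hnonneg u)
    rw [integral_const_mul] at h1
    calc iterConv φ (n + 1) x ≤ ((∫ y, φ y) + 1) ^ n * ∫ y, φ y := h1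
      _ ≤ ((∫ y, φ y) + 1) ^ n * ((∫ y, φ y) + 1) := by
          refine mul_le_mul_of_nonneg_left (by linarith) (by positivity)
      _ = ((∫ y, φ y) + 1) ^ (n + 1) := by ring

include hsymm in
lemma iterConv_symm : ∀ n x, iterConv φ n (-x) = iterConv φ n x := by
  intro n
  induction n with
  | zero => exact hsymm
  | succ n ih =>
    intro x
    show (∫ u, iterConv φ n (-x - u) * φ u) = ∫ u, iterConv φ n (x - u) * φ u
    rw [← integral_neg_eq_self (fun u => iterConv φ n (x - u) * φ u)]
    congr 1; funext u
    rw [hsymm, sub_neg_eq_add]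
    congr 1
    rw [← ih (x + u)]
    congr 1
    abel

include hint hnonneg hle in
lemma iterConv_add : ∀ a b, iterConv φ (a + b + 1) = conv (iterConv φ a) (iterConv φ b) := by
  intro a b
  induction b with
  | zero => rfl
  | succ b ih =>
    have hia := iterConv_integrable φ hint a
    have hib := iterConv_integrable φ hint b
    show iterConv φ (a + b + 1 + 1) = _
    show conv (iterConv φ (a + b + 1)) φ = _
    rw [ih]
    show _ = conv (iterConv φ a) (conv (iterConv φ b) φ)
    funext x₀
    rw [conv_eq, conv_eq (iterConv φ b) φ, conv_eq, conv_eq]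
    have habs : ∀ (h : EuclideanSpace ℝ (Fin d) → ℝ), (∀ y, 0 ≤ h y) →
        (fun y => ‖h y‖) = h := by
      intro h h0; funext y; exact Real.norm_of_nonneg (h0 y)
    refine Eq.symm <| convolution_assoc (ContinuousLinearMap.mul ℝ ℝ) (ContinuousLinearMap.mul ℝ ℝ)
      (ContinuousLinearMap.mul ℝ ℝ) (ContinuousLinearMap.mul ℝ ℝ)
      (fun x y z => mul_assoc x y z)
      hint.aestronglyMeasurable hib.aestronglyMeasurable hia.aestronglyMeasurable
      (hint.ae_convolution_exists _ hib) ?_ ?_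
    · rw [habs _ (iterConv_nonneg φ hnonneg b), habs _ (iterConv_nonneg φ hnonneg a)]
      exact hib.ae_convolution_exists _ hia
    · rw [habs _ hnonneg, habs _ (iterConv_nonneg φ hnonneg b),
        habs _ (iterConv_nonneg φ hnonneg a)]
      unfold ConvolutionExistsAt
      have hrw : (iterConv φ b ⋆[ContinuousLinearMap.mul ℝ ℝ, volume] iterConv φ a)
          = iterConv φ (a + b + 1) := by rw [← conv_eq, ← ih]
      rw [hrw]
      simp only [ContinuousLinearMap.mul_apply']
      have h1 : Integrable (fun t => iterConv φ (a + b + 1) (x₀ - t) * φ t) volume := by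
        refine hint.bdd_mul (c := ((∫ y, φ y) + 1) ^ (a + b + 1)) ?_ ?_
        · exact (iterConv_integrable φ hint
            (a + b + 1)).aestronglyMeasurable.comp_quasiMeasurePreserving
            (Measure.measurePreserving_sub_left volume x₀).quasiMeasurePreserving
        · exact Filter.Eventually.of_forall fun x => by
            rw [Real.norm_of_nonneg (iterConv_nonneg φ hnonneg _ _)]
            exact iterConv_bdd φ hint hnonneg hle _ _
      simpa [mul_comm] using h1

include hint in
lemma integral_iterConv : ∀ n, (∫ x, iterConv φ n x) = (∫ x, φ x) ^ (n + 1) := by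
  intro n
  induction n with
  | zero => show (∫ x, φ x) = _; simp
  | succ n ih =>
    show (∫ x, conv (iterConv φ n) φ x) = _
    rw [conv_eq]
    rw [MeasureTheory.integral_convolution _ hint (iterConv_integrable φ hint n)]
    simp only [ContinuousLinearMap.mul_apply']
    rw [ih]; ring

include hint hnonneg hle hsymm in
lemma iterConv_at_zero (a b : ℕ) :
    iterConv φ (a + b + 1) 0 = ∫ u, iterConv φ a u * iterConv φ b u := by
  rw [iterConv_add φ hint hnonneg hle a b]
  show (∫ u, iterConv φ a (0 - u) * iterConv φ b u) = _
  congr 1; funext u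
  rw [zero_sub, iterConv_symm φ hsymm]

include hint hnonneg hle hsymm in
lemma iterConv_five_le (x : EuclideanSpace ℝ (Fin d)) :
    iterConv φ 5 x ≤ iterConv φ 5 0 := by
  set f := iterConv φ 2 with hf
  have hfi : Integrable f := iterConv_integrable φ hint 2
  have hf0 : ∀ u, 0 ≤ f u := iterConv_nonneg φ hnonneg 2
  have hfb : ∀ u, f u ≤ ((∫ y, φ y) + 1) ^ 2 := iterConv_bdd φ hint hnonneg hle 2
  have hf2 : Integrable (fun u => f u ^ 2) := by
    refine (hfi.const_mul (((∫ y, φ y) + 1) ^ 2)).mono'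
      (hfi.aestronglyMeasurable.mul hfi.aestronglyMeasurable |>.congr ?_) ?_
    · exact Filter.Eventually.of_forall fun u => (sq (f u)).symm
    · refine Filter.Eventually.of_forall fun u => ?_
      rw [Real.norm_of_nonneg (by positivity)]
      rw [sq]
      exact mul_le_mul_of_nonneg_right (hfb u) (hf0 u)
  have hmem : MemLp f (ENNReal.ofReal 2) volume := by
    rw [show ENNReal.ofReal 2 = 2 by norm_num]
    exact (memLp_two_iff_integrable_sq hfi.aestronglyMeasurable).2 hf2
  have hmem' : MemLp (fun u => f (u - x)) (ENNReal.ofReal 2) volume :=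
    hmem.comp_measurePreserving (measurePreserving_sub_right volume x)
  have h5 : iterConv φ 5 = conv f f := iterConv_add φ hint hnonneg hle 2 2
  have h50 : iterConv φ 5 0 = ∫ u, f u * f u := iterConv_at_zero φ hint hnonneg hle hsymm 2 2
  have hstep : iterConv φ 5 x = ∫ u, f (u - x) * f u := by
    rw [h5]
    show (∫ u, f (x - u) * f u) = _
    congr 1; funext u
    congr 1
    show iterConv φ 2 (x - u) = iterConv φ 2 (u - x)
    rw [← iterConv_symm φ hsymm 2 (x - u), neg_sub]
  have hconj : Real.HolderConjugate 2 2 := Real.HolderConjugate.two_two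
  have hH := integral_mul_le_Lp_mul_Lq_of_nonneg (μ := volume) hconj
    (Filter.Eventually.of_forall fun u => hf0 (u - x))
    (Filter.Eventually.of_forall hf0) hmem' hmem
  set I := ∫ u, f u ^ (2:ℝ) with hI
  have htrans : (∫ u, f (u - x) ^ (2:ℝ)) = I :=
    integral_sub_right_eq_self (fun u => f u ^ (2:ℝ)) x
  have hI0 : 0 ≤ I := integral_nonneg fun u => Real.rpow_nonneg (hf0 u) _
  have hIval : I = iterConv φ 5 0 := by
    rw [h50, hI]
    congr 1; funext u
    rw [show (2:ℝ) = ((2:ℕ):ℝ) by norm_num, Real.rpow_natCast, sq]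
  have hrpow : I ^ ((1:ℝ)/2) * I ^ ((1:ℝ)/2) = I := by
    rw [← Real.rpow_add' hI0 (by norm_num : (1:ℝ)/2 + 1/2 ≠ 0)]
    norm_num
  calc iterConv φ 5 x = ∫ u, f (u - x) * f u := hstep
    _ ≤ (∫ u, f (u - x) ^ (2:ℝ)) ^ ((1:ℝ)/2) * (∫ u, f u ^ (2:ℝ)) ^ ((1:ℝ)/2) := hH
    _ = I := by rw [htrans, ← hI, hrpow]
    _ = iterConv φ 5 0 := hIval
end
theorem stmt_1 {d : ℕ} (φ : EuclideanSpace ℝ (Fin d) → ℝ)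
    (hint : Integrable φ) (hnonneg : ∀ x, 0 ≤ φ x) (hle : ∀ x, φ x ≤ 1)
    (hsymm : ∀ x, φ (-x) = φ x)
    (n₁ n₂ : ℕ) (h₁ : 2 ≤ n₁) (h₂ : 2 ≤ n₂) (hsum : 6 ≤ n₁ + n₂) :
    (∫ x, iterConv φ (n₁ - 1) x * iterConv φ (n₂ - 1) x * φ x) ≤
        iterConv φ (n₁ + n₂ - 1) 0 ∧
      iterConv φ (n₁ + n₂ - 1) 0 ≤ (∫ x, φ x) ^ (n₁ + n₂ - 6) * iterConv φ 5 0 := by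
  constructor
  · have ha : n₁ - 1 + (n₂ - 1) + 1 = n₁ + n₂ - 1 := by omega
    have hz := iterConv_at_zero φ hint hnonneg hle hsymm (n₁ - 1) (n₂ - 1)
    rw [ha] at hz
    rw [hz]
    refine integral_mono_of_nonneg
      (Filter.Eventually.of_forall fun x => mul_nonneg
        (mul_nonneg (iterConv_nonneg φ hnonneg _ _) (iterConv_nonneg φ hnonneg _ _))
        (hnonneg x)) ?_ ?_
    · refine (iterConv_integrable φ hint (n₂ - 1)).bdd_mul (c := ((∫ y, φ y) + 1) ^ (n₁ - 1))
        (iterConv_integrable φ hint (n₁ - 1)).aestronglyMeasurable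
        (Filter.Eventually.of_forall fun x => ?_)
      rw [Real.norm_of_nonneg (iterConv_nonneg φ hnonneg _ _)]
      exact iterConv_bdd φ hint hnonneg hle _ _
    · refine Filter.Eventually.of_forall fun x => ?_
      exact mul_le_of_le_one_right
        (mul_nonneg (iterConv_nonneg φ hnonneg _ _) (iterConv_nonneg φ hnonneg _ _)) (hle x)
  · by_cases h6 : n₁ + n₂ = 6
    · rw [h6]
      norm_num
    · have h7 : 5 + (n₁ + n₂ - 7) + 1 = n₁ + n₂ - 1 := by omega
      have hz := iterConv_at_zero φ hint hnonneg hle hsymm 5 (n₁ + n₂ - 7)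
      rw [h7] at hz
      rw [hz]
      have hb : (∫ u, iterConv φ 5 u * iterConv φ (n₁ + n₂ - 7) u) ≤
          ∫ u, iterConv φ 5 0 * iterConv φ (n₁ + n₂ - 7) u := by
        refine integral_mono_of_nonneg
          (Filter.Eventually.of_forall fun u => mul_nonneg
            (iterConv_nonneg φ hnonneg _ _) (iterConv_nonneg φ hnonneg _ _))
          ((iterConv_integrable φ hint _).const_mul _)
          (Filter.Eventually.of_forall fun u => ?_)
        exact mul_le_mul_of_nonneg_right
          (iterConv_five_le φ hint hnonneg hle hsymm u) (iterConv_nonneg φ hnonneg _ _)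
      refine hb.trans (le_of_eq ?_)
      rw [integral_const_mul, integral_iterConv φ hint]
      rw [show n₁ + n₂ - 7 + 1 = n₁ + n₂ - 6 by omega]
      ring
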